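/- In the two-graph Moran process, the probability that the mutant set S reaches fixation with mutant fitness r, mutant graph G_M and resident graph G_R equals 1 minus the probability that the complement set V∖S reaches fixation in the process where the roles are exchanged: resident graph G_M, mutant graph G_R, and mutant fitness 1/r. Formally, f^S_{G_R,G_M}(r) = 1 − f^{V∖S}_{G_M,G_R}(1/r). -/

import Mathlib

open Finset

variable {V : Type*} [Fintype V] [DecidableEq V]

/-- One-step transition probability of the two-graph Moran process with relative fitness `r`,
resident weight matrix `wR` and mutant weight matrix `wM`, from mutant set `S` to set `T`.
An individual is chosen with probability proportional to its fitness (residents `1`,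
mutants `r`) and reproduces on a neighbour in its own graph. -/
noncomputable def moranStep (r : ℝ) (wR wM : V → V → ℝ) (S T : Finset V) : ℝ :=
  ((∑ i ∈ S, ∑ j ∈ Sᶜ, (if T = insert j S then r * wM i j else 0)) +
   (∑ j ∈ Sᶜ, ∑ i ∈ S, (if T = S.erase i then wR j i else 0)) +
   (if T = S then (∑ i ∈ S, ∑ j ∈ S, r * wM i j) + (∑ i ∈ Sᶜ, ∑ j ∈ Sᶜ, wR i j) else 0))
  / (S.card * r + ((Fintype.card V : ℝ) - S.card))

/-- `t`-step transition probabilities of the two-graph Moran process. -/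
noncomputable def moranIter (r : ℝ) (wR wM : V → V → ℝ) : ℕ → Finset V → Finset V → ℝ
  | 0 => fun S T => if T = S then 1 else 0
  | (t + 1) => fun S T => ∑ U : Finset V, moranStep r wR wM S U * moranIter r wR wM t U T

/-- Fixation probability of the two-graph Moran process started from mutant set `S`:
the probability of eventual absorption at the all-mutant state `V` (the probability of
being at the absorbing state `univ` is nondecreasing in `t`, so the limit is the `⨆`). -/
noncomputable def fixProbFrom (r : ℝ) (wR wM : V → V → ℝ) (S : Finset V) : ℝ :=
  ⨆ t : ℕ, moranIter r wR wM t S Finset.univ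

/-- Fixation probability of the two-graph Moran process started from a single
uniformly random mutant. -/
noncomputable def fixProb (r : ℝ) (wR wM : V → V → ℝ) : ℝ :=
  (∑ u : V, fixProbFrom r wR wM {u}) / (Fintype.card V)

/-- A weight matrix is a strongly connected graph structure: positive-weight edges
connect every ordered pair of vertices. -/
def StronglyConnectedW (w : V → V → ℝ) : Prop :=
  ∀ i j : V, Relation.ReflTransGen (fun a b => 0 < w a b) i j

/-- Admissible weight matrix: nonnegative, zero diagonal, rows sum to 1. -/
def IsWeightMatrix (w : V → V → ℝ) : Prop :=
  (∀ i j, 0 ≤ w i j) ∧ (∀ i, w i i = 0) ∧ (∀ i, ∑ j, w i j = 1)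

set_option linter.unusedSectionVars false
section Lemmas

variable {r : ℝ} {wR wM : V → V → ℝ}

lemma moran_denom_nonneg (hr : 0 ≤ r) (S : Finset V) :
    0 ≤ (S.card : ℝ) * r + ((Fintype.card V : ℝ) - S.card) := by
  have h2 : (S.card : ℝ) ≤ (Fintype.card V : ℝ) := by
    exact_mod_cast (Finset.card_le_univ S).trans_eq Finset.card_univ
  have : 0 ≤ (S.card : ℝ) * r := by positivity
  linarith

lemma moran_denom_pos [Nonempty V] (hr : 0 < r) (S : Finset V) :
    0 < (S.card : ℝ) * r + ((Fintype.card V : ℝ) - S.card) := by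
  have h2 : (S.card : ℝ) ≤ (Fintype.card V : ℝ) := by
    exact_mod_cast (Finset.card_le_univ S).trans_eq Finset.card_univ
  rcases Nat.eq_zero_or_pos S.card with h | h
  · have : (0:ℝ) < Fintype.card V := by exact_mod_cast Fintype.card_pos
    rw [h]; push_cast; linarith
  · have : (0:ℝ) < (S.card : ℝ) * r := by
      have : (0:ℝ) < (S.card : ℝ) := by exact_mod_cast h
      positivity
    linarith

lemma moranStep_nonneg (hr : 0 ≤ r) (hR : ∀ i j, 0 ≤ wR i j) (hM : ∀ i j, 0 ≤ wM i j)
    (S T : Finset V) : 0 ≤ moranStep r wR wM S T := by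
  unfold moranStep
  refine div_nonneg (add_nonneg (add_nonneg ?_ ?_) ?_) (moran_denom_nonneg hr S)
  · exact Finset.sum_nonneg fun i _ => Finset.sum_nonneg fun j _ => by
      split <;> [exact mul_nonneg hr (hM i j); rfl]
  · exact Finset.sum_nonneg fun i _ => Finset.sum_nonneg fun j _ => by
      split <;> [exact hR i j; rfl]
  · split
    · refine add_nonneg ?_ ?_
      · exact Finset.sum_nonneg fun i _ => Finset.sum_nonneg fun j _ =>
          mul_nonneg hr (hM i j)
      · exact Finset.sum_nonneg fun i _ => Finset.sum_nonneg fun j _ => hR i j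
    · rfl

lemma moranStep_rowsum [Nonempty V] (hr : 0 < r)
    (hwR : IsWeightMatrix wR) (hwM : IsWeightMatrix wM) (S : Finset V) :
    ∑ T : Finset V, moranStep r wR wM S T = 1 := by
  unfold moranStep
  rw [← Finset.sum_div]
  rw [div_eq_one_iff_eq (moran_denom_pos hr S).ne']
  have hA : ∑ T : Finset V, ∑ i ∈ S, ∑ j ∈ Sᶜ, (if T = insert j S then r * wM i j else 0)
      = ∑ i ∈ S, ∑ j ∈ Sᶜ, r * wM i j := by
    rw [Finset.sum_comm]
    refine Finset.sum_congr rfl fun i _ => ?_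
    rw [Finset.sum_comm]
    exact Finset.sum_congr rfl fun j _ => by simp
  have hB : ∑ T : Finset V, ∑ j ∈ Sᶜ, ∑ i ∈ S, (if T = S.erase i then wR j i else 0)
      = ∑ j ∈ Sᶜ, ∑ i ∈ S, wR j i := by
    rw [Finset.sum_comm]
    refine Finset.sum_congr rfl fun j _ => ?_
    rw [Finset.sum_comm]
    exact Finset.sum_congr rfl fun i _ => by simp
  have hC : ∑ T : Finset V, (if T = S then
        (∑ i ∈ S, ∑ j ∈ S, r * wM i j) + (∑ i ∈ Sᶜ, ∑ j ∈ Sᶜ, wR i j) else 0)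
      = (∑ i ∈ S, ∑ j ∈ S, r * wM i j) + (∑ i ∈ Sᶜ, ∑ j ∈ Sᶜ, wR i j) := by simp
  rw [Finset.sum_add_distrib, Finset.sum_add_distrib, hA, hB, hC]
  have hM : (∑ i ∈ S, ∑ j ∈ Sᶜ, r * wM i j) + (∑ i ∈ S, ∑ j ∈ S, r * wM i j)
      = (S.card : ℝ) * r := by
    rw [← Finset.sum_add_distrib]
    have : ∀ i ∈ S, (∑ j ∈ Sᶜ, r * wM i j) + (∑ j ∈ S, r * wM i j) = r := by
      intro i _
      rw [Finset.sum_compl_add_sum, ← Finset.mul_sum, hwM.2.2 i, mul_one]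
    rw [Finset.sum_congr rfl this, Finset.sum_const, nsmul_eq_mul]
  have hR : (∑ j ∈ Sᶜ, ∑ i ∈ S, wR j i) + (∑ i ∈ Sᶜ, ∑ j ∈ Sᶜ, wR i j)
      = (Fintype.card V : ℝ) - S.card := by
    rw [← Finset.sum_add_distrib]
    have : ∀ j ∈ Sᶜ, (∑ i ∈ S, wR j i) + (∑ i ∈ Sᶜ, wR j i) = 1 := by
      intro j _
      rw [Finset.sum_add_sum_compl, hwR.2.2 j]
    rw [Finset.sum_congr rfl this, Finset.sum_const, nsmul_eq_mul, mul_one,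
      Finset.card_compl, Nat.cast_sub ((Finset.card_le_univ S).trans_eq Finset.card_univ)]
  linarith

lemma moranIter_nonneg (hr : 0 ≤ r) (hR : ∀ i j, 0 ≤ wR i j) (hM : ∀ i j, 0 ≤ wM i j)
    (t : ℕ) (S T : Finset V) : 0 ≤ moranIter r wR wM t S T := by
  induction t generalizing S T with
  | zero => simp only [moranIter]; split <;> norm_num
  | succ t ih =>
    simp only [moranIter]
    exact Finset.sum_nonneg fun U _ =>
      mul_nonneg (moranStep_nonneg hr hR hM S U) (ih U T)

lemma moranIter_rowsum [Nonempty V] (hr : 0 < r)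
    (hwR : IsWeightMatrix wR) (hwM : IsWeightMatrix wM) (t : ℕ) (S : Finset V) :
    ∑ T : Finset V, moranIter r wR wM t S T = 1 := by
  induction t generalizing S with
  | zero => simp [moranIter]
  | succ t ih =>
    simp only [moranIter]
    rw [Finset.sum_comm]
    calc ∑ U : Finset V, ∑ T : Finset V, moranStep r wR wM S U * moranIter r wR wM t U T
        = ∑ U : Finset V, moranStep r wR wM S U := by
          refine Finset.sum_congr rfl fun U _ => ?_
          rw [← Finset.mul_sum, ih U, mul_one]
      _ = 1 := moranStep_rowsum hr hwR hwM S

lemma moranIter_le_one [Nonempty V] (hr : 0 < r)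
    (hwR : IsWeightMatrix wR) (hwM : IsWeightMatrix wM) (t : ℕ) (S T : Finset V) :
    moranIter r wR wM t S T ≤ 1 := by
  rw [← moranIter_rowsum hr hwR hwM t S]
  exact Finset.single_le_sum
    (fun U _ => moranIter_nonneg hr.le hwR.1 hwM.1 t S U) (Finset.mem_univ T)

lemma moranIter_add (s t : ℕ) (S T : Finset V) :
    moranIter r wR wM (s + t) S T
      = ∑ U : Finset V, moranIter r wR wM s S U * moranIter r wR wM t U T := by
  induction s generalizing S with
  | zero =>
    simp only [Nat.zero_add, moranIter]
    rw [Finset.sum_congr rfl (fun U _ => by rw [ite_mul, one_mul, zero_mul]),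
      Finset.sum_ite_eq' Finset.univ S]
    simp
  | succ s ih =>
    have : s + 1 + t = (s + t) + 1 := by omega
    rw [this]
    simp only [moranIter]
    calc ∑ W : Finset V, moranStep r wR wM S W * moranIter r wR wM (s + t) W T
        = ∑ W : Finset V, ∑ U : Finset V,
            (moranStep r wR wM S W * moranIter r wR wM s W U) * moranIter r wR wM t U T := by
          refine Finset.sum_congr rfl fun W _ => ?_
          rw [ih W, Finset.mul_sum]
          exact Finset.sum_congr rfl fun U _ => by ring
      _ = ∑ U : Finset V, (∑ W : Finset V, moranStep r wR wM S W * moranIter r wR wM s W U)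
            * moranIter r wR wM t U T := by
          rw [Finset.sum_comm]
          exact Finset.sum_congr rfl fun U _ => by rw [Finset.sum_mul]

lemma moranIter_succ' (t : ℕ) (S T : Finset V) :
    moranIter r wR wM (t + 1) S T
      = ∑ U : Finset V, moranIter r wR wM t S U * moranStep r wR wM U T := by
  rw [moranIter_add t 1 S T]
  refine Finset.sum_congr rfl fun U _ => ?_
  congr 1
  simp only [moranIter, mul_ite, mul_one, mul_zero]
  rw [Finset.sum_ite_eq Finset.univ T, if_pos (Finset.mem_univ T)]

lemma moranStep_univ [Nonempty V] (hr : 0 < r) (hwM : IsWeightMatrix wM) (T : Finset V) :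
    moranStep r wR wM (Finset.univ : Finset V) T = if T = Finset.univ then 1 else 0 := by
  have hn : (0:ℝ) < Fintype.card V := by exact_mod_cast Fintype.card_pos
  unfold moranStep
  simp only [Finset.compl_univ, Finset.sum_empty, Finset.sum_const_zero, add_zero, zero_add,
    Finset.card_univ]
  have : ∑ i : V, ∑ j : V, r * wM i j = (Fintype.card V : ℝ) * r := by
    rw [Finset.sum_congr rfl fun i _ => by rw [← Finset.mul_sum, hwM.2.2 i, mul_one]]
    simp [mul_comm]
  split
  · rw [this, sub_self, add_zero, div_self (by positivity)]
  · simp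

lemma moranStep_empty [Nonempty V] (hr : 0 < r) (hwR : IsWeightMatrix wR) (T : Finset V) :
    moranStep r wR wM (∅ : Finset V) T = if T = ∅ then 1 else 0 := by
  have hn : (0:ℝ) < Fintype.card V := by exact_mod_cast Fintype.card_pos
  unfold moranStep
  simp only [Finset.compl_empty, Finset.sum_empty, Finset.sum_const_zero, add_zero, zero_add,
    Finset.card_empty, Nat.cast_zero, zero_mul, sub_zero]
  have : ∑ i : V, ∑ j : V, wR i j = (Fintype.card V : ℝ) := by
    rw [Finset.sum_congr rfl fun i _ => hwR.2.2 i]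
    simp
  split
  · rw [this, div_self hn.ne']
  · simp

lemma moranIter_absorbing {A : Finset V}
    (habs : ∀ T, moranStep r wR wM A T = if T = A then 1 else 0) (t : ℕ) (T : Finset V) :
    moranIter r wR wM t A T = if T = A then 1 else 0 := by
  induction t with
  | zero => rfl
  | succ t ih =>
    simp only [moranIter]
    rw [Finset.sum_congr rfl (fun U _ => by rw [habs U, ite_mul, one_mul, zero_mul]),
      Finset.sum_ite_eq' Finset.univ A, if_pos (Finset.mem_univ A), ih]

lemma moranIter_mono [Nonempty V] (hr : 0 < r)
    (hwR : IsWeightMatrix wR) (hwM : IsWeightMatrix wM) {A : Finset V}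
    (habs : ∀ T, moranStep r wR wM A T = if T = A then 1 else 0) (S : Finset V) :
    Monotone (fun t => moranIter r wR wM t S A) := by
  refine monotone_nat_of_le_succ fun t => ?_
  rw [moranIter_succ' t S A]
  calc moranIter r wR wM t S A = moranIter r wR wM t S A * moranStep r wR wM A A := by
        rw [habs A, if_pos rfl, mul_one]
    _ ≤ ∑ U : Finset V, moranIter r wR wM t S U * moranStep r wR wM U A :=
        Finset.single_le_sum (fun U _ =>
          mul_nonneg (moranIter_nonneg hr.le hwR.1 hwM.1 t S U)
            (moranStep_nonneg hr.le hwR.1 hwM.1 U A)) (Finset.mem_univ A)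

lemma cross_aux {w : V → V → ℝ} {U : Finset V} {a b : V}
    (h : Relation.ReflTransGen (fun x y => 0 < w x y) a b) (ha : a ∈ U) (hb : b ∉ U) :
    ∃ i ∈ U, ∃ j, j ∉ U ∧ 0 < w i j := by
  induction h with
  | refl => exact absurd ha hb
  | @tail c d h1 h2 ih =>
    by_cases hc : c ∈ U
    · exact ⟨c, hc, d, hb, h2⟩
    · exact ih hc

lemma exists_cross {w : V → V → ℝ}
    (hsc : ∀ i j : V, Relation.ReflTransGen (fun x y => 0 < w x y) i j)
    {U : Finset V} (hU : U.Nonempty) (hU' : U ≠ Finset.univ) :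
    ∃ i ∈ U, ∃ j, j ∉ U ∧ 0 < w i j := by
  obtain ⟨a, ha⟩ := hU
  obtain ⟨b, hb⟩ : ∃ b, b ∉ U := by
    by_contra h
    push_neg at h
    exact hU' (Finset.eq_univ_of_forall h)
  exact cross_aux (hsc a b) ha hb

lemma moranStep_pos_insert [Nonempty V] (hr : 0 < r)
    (hR : ∀ i j, 0 ≤ wR i j) (hM : ∀ i j, 0 ≤ wM i j)
    {U : Finset V} {i j : V} (hi : i ∈ U) (hj : j ∉ U) (hw : 0 < wM i j) :
    0 < moranStep r wR wM U (insert j U) := by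
  unfold moranStep
  refine div_pos ?_ (moran_denom_pos hr U)
  have hB : 0 ≤ ∑ j' ∈ Uᶜ, ∑ i' ∈ U, (if insert j U = U.erase i' then wR j' i' else 0) :=
    Finset.sum_nonneg fun a _ => Finset.sum_nonneg fun b _ => by
      split <;> [exact hR a b; rfl]
  have hC : 0 ≤ (if insert j U = U then
      (∑ i' ∈ U, ∑ j' ∈ U, r * wM i' j') + (∑ i' ∈ Uᶜ, ∑ j' ∈ Uᶜ, wR i' j') else 0) := by
    split
    · exact add_nonneg
        (Finset.sum_nonneg fun a _ => Finset.sum_nonneg fun b _ => mul_nonneg hr.le (hM a b))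
        (Finset.sum_nonneg fun a _ => Finset.sum_nonneg fun b _ => hR a b)
    · rfl
  have hA : 0 < ∑ i' ∈ U, ∑ j' ∈ Uᶜ, (if insert j U = insert j' U then r * wM i' j' else 0) := by
    refine Finset.sum_pos' (fun a _ => Finset.sum_nonneg fun b _ => by
      split <;> [exact mul_nonneg hr.le (hM a b); rfl]) ⟨i, hi, ?_⟩
    refine Finset.sum_pos' (fun b _ => by split <;> [exact mul_nonneg hr.le (hM i b); rfl])
      ⟨j, Finset.mem_compl.2 hj, ?_⟩
    rw [if_pos rfl]
    positivity
  linarith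

lemma moran_reach [Nonempty V] (hr : 0 < r)
    (hwR : IsWeightMatrix wR) (hwM : IsWeightMatrix wM)
    (hscM : ∀ i j : V, Relation.ReflTransGen (fun x y => 0 < wM x y) i j) :
    ∀ (k : ℕ) (U : Finset V), U.Nonempty → Fintype.card V - U.card = k →
      0 < moranIter r wR wM k U Finset.univ := by
  intro k
  induction k with
  | zero =>
    intro U hU hcard
    have : U = Finset.univ := by
      apply Finset.eq_univ_of_card
      have := (Finset.card_le_univ U).trans_eq Finset.card_univ
      omega
    subst this
    simp [moranIter]
  | succ k ih =>
    intro U hU hcard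
    have hUne : U ≠ Finset.univ := by
      intro h; subst h
      rw [Finset.card_univ] at hcard; omega
    obtain ⟨i, hi, j, hj, hw⟩ := exists_cross hscM hU hUne
    have hcard' : Fintype.card V - (insert j U).card = k := by
      rw [Finset.card_insert_of_notMem hj]
      have := (Finset.card_le_univ U).trans_eq (Finset.card_univ (α := V))
      omega
    have hpos := ih (insert j U) (Finset.insert_nonempty j U) hcard'
    simp only [moranIter]
    refine Finset.sum_pos' (fun W _ =>
      mul_nonneg (moranStep_nonneg hr.le hwR.1 hwM.1 U W)
        (moranIter_nonneg hr.le hwR.1 hwM.1 k W Finset.univ))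
      ⟨insert j U, Finset.mem_univ _, ?_⟩
    exact mul_pos (moranStep_pos_insert hr hwR.1 hwM.1 hi hj hw) hpos

lemma moranStep_dual (hr : r ≠ 0) (S T : Finset V) :
    moranStep (1/r) wM wR Sᶜ Tᶜ = moranStep r wR wM S T := by
  unfold moranStep
  rw [show ∀ (N d : ℝ), N / d = (r * N) / (r * d) from
    fun N d => (mul_div_mul_left N d hr).symm]
  congr 1
  · simp only [compl_compl, ← Finset.compl_erase, ← Finset.compl_insert, compl_inj_iff]
    simp only [mul_add, Finset.mul_sum, mul_ite, mul_zero, one_div,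
      mul_inv_cancel_left₀ hr]
    congr 1
    · ring
    · split_ifs <;> ring
  · rw [Finset.card_compl, Nat.cast_sub ((Finset.card_le_univ S).trans_eq Finset.card_univ)]
    field_simp
    ring

lemma moranIter_dual (hr : r ≠ 0) (t : ℕ) (S T : Finset V) :
    moranIter (1/r) wM wR t Sᶜ Tᶜ = moranIter r wR wM t S T := by
  induction t generalizing S T with
  | zero => simp only [moranIter, compl_inj_iff]
  | succ t ih =>
    simp only [moranIter]
    rw [← Equiv.sum_comp (Function.Involutive.toPerm compl (fun x : Finset V => compl_compl x))
      (fun U => moranStep (1/r) wM wR Sᶜ U * moranIter (1/r) wM wR t U Tᶜ)]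
    refine Finset.sum_congr rfl fun U _ => ?_
    show moranStep (1/r) wM wR Sᶜ Uᶜ * moranIter (1/r) wM wR t Uᶜ Tᶜ = _
    rw [moranStep_dual hr, ih]

end Lemmas

/-- **Duality of the two-graph Moran process.** The probability that mutant set `S` reaches
fixation with mutant fitness `r`, mutant graph `wM` and resident graph `wR` equals one
minus the fixation probability of the complement set `V ∖ S` in the process with the roles
exchanged: resident graph `wM`, mutant graph `wR`, mutant fitness `1/r`. -/
theorem moran_duality'
    {V : Type*} [Fintype V] [DecidableEq V] [Nonempty V]
    (r : ℝ) (hr : 0 < r) (wR wM : V → V → ℝ)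
    (hwR : IsWeightMatrix wR) (hwM : IsWeightMatrix wM)
    (hscR : ∀ i j : V, Relation.ReflTransGen (fun a b => 0 < wR a b) i j)
    (hscM : ∀ i j : V, Relation.ReflTransGen (fun a b => 0 < wM a b) i j)
    (S : Finset V) :
    (⨆ t : ℕ, moranIter r wR wM t S Finset.univ)
      = 1 - ⨆ t : ℕ, moranIter (1/r) wM wR t Sᶜ Finset.univ := by
  classical
  set n := Fintype.card V with hn
  set a : ℕ → ℝ := fun t => moranIter r wR wM t S Finset.univ with ha
  set b : ℕ → ℝ := fun t => moranIter r wR wM t S ∅ with hb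
  -- rewrite the dual supremum via complement duality
  have hdual : (⨆ t : ℕ, moranIter (1/r) wM wR t Sᶜ Finset.univ) = ⨆ t, b t := by
    refine iSup_congr fun t => ?_
    rw [hb]
    rw [show (Finset.univ : Finset V) = (∅ : Finset V)ᶜ from (Finset.compl_empty).symm,
      moranIter_dual hr.ne' t S ∅]
  rw [hdual]
  have habsU : ∀ T : Finset V, moranStep r wR wM Finset.univ T = if T = Finset.univ then 1 else 0 :=
    moranStep_univ hr hwM
  have habsE : ∀ T : Finset V, moranStep r wR wM (∅ : Finset V) T = if T = ∅ then 1 else 0 :=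
    moranStep_empty hr hwR
  have huvne : (Finset.univ : Finset V) ≠ ∅ := Finset.univ_nonempty.ne_empty
  set R : Finset (Finset V) := ({Finset.univ, ∅} : Finset (Finset V))ᶜ with hR
  set q : ℕ → ℝ := fun m => ∑ T ∈ R, moranIter r wR wM m S T with hq
  have hsplit : ∀ (m : ℕ) (W : Finset V), ∑ T ∈ R, moranIter r wR wM m W T
      = 1 - (moranIter r wR wM m W Finset.univ + moranIter r wR wM m W ∅) := by
    intro m W
    have h := Finset.sum_add_sum_compl R (fun T => moranIter r wR wM m W T)
    rw [moranIter_rowsum hr hwR hwM m W, hR, compl_compl,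
      Finset.sum_pair huvne] at h
    linarith
  have hiternn : ∀ (m : ℕ) (W T : Finset V), 0 ≤ moranIter r wR wM m W T :=
    fun m W T => moranIter_nonneg hr.le hwR.1 hwM.1 m W T
  have hqnn : ∀ m, 0 ≤ q m := fun m => Finset.sum_nonneg fun T _ => hiternn m S T
  have h1 : ∀ m, a m + b m + q m = 1 := by
    intro m
    have := hsplit m S
    rw [hq, ha, hb]
    simp only at this ⊢
    linarith
  -- the uniform absorption bound
  set g : Finset V → ℝ := fun U => moranIter r wR wM n U Finset.univ + moranIter r wR wM n U ∅
    with hg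
  have hgpos : ∀ U : Finset V, 0 < g U := by
    intro U
    rcases eq_or_ne U ∅ with h | h
    · subst h
      have : moranIter r wR wM n (∅ : Finset V) (∅ : Finset V) = 1 := by
        rw [moranIter_absorbing habsE n, if_pos rfl]
      rw [hg]; simp only
      rw [this]
      have := hiternn n (∅ : Finset V) Finset.univ
      linarith
    · have hUne : U.Nonempty := Finset.nonempty_iff_ne_empty.2 h
      have hreach := moran_reach hr hwR hwM hscM (n - U.card) U hUne rfl
      have hmono := (moranIter_mono hr hwR hwM habsU U) (Nat.sub_le n U.card)
      have := hiternn n U (∅ : Finset V)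
      rw [hg]; simp only
      have : 0 < moranIter r wR wM n U Finset.univ := lt_of_lt_of_le hreach hmono
      have := hiternn n U (∅ : Finset V)
      linarith
  have hne : (Finset.univ : Finset (Finset V)).Nonempty := Finset.univ_nonempty
  set ε : ℝ := Finset.univ.inf' hne g with hε
  have hεpos : 0 < ε := (Finset.lt_inf'_iff hne).2 fun U _ => hgpos U
  have hε1 : ε ≤ 1 := by
    have h2 : g (∅ : Finset V) = 1 := by
      rw [hg]; simp only
      rw [moranIter_absorbing habsE n, moranIter_absorbing habsE n,
        if_neg huvne, if_pos rfl]
      norm_num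
    calc ε ≤ g (∅ : Finset V) := Finset.inf'_le g (Finset.mem_univ _)
      _ = 1 := h2
  have hεle : ∀ U : Finset V, ε ≤ g U := fun U => Finset.inf'_le g (Finset.mem_univ U)
  -- contraction
  have hcontr : ∀ t, q (t + n) ≤ (1 - ε) * q t := by
    intro t
    have e1 : q (t + n) = ∑ U : Finset V,
        moranIter r wR wM t S U * ∑ T ∈ R, moranIter r wR wM n U T := by
      rw [hq]
      simp only
      rw [Finset.sum_congr rfl fun T _ => moranIter_add t n S T, Finset.sum_comm]
      exact Finset.sum_congr rfl fun U _ => (Finset.mul_sum _ _ _).symm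
    rw [e1, ← Finset.sum_add_sum_compl R
      (fun U => moranIter r wR wM t S U * ∑ T ∈ R, moranIter r wR wM n U T)]
    have h2 : ∑ U ∈ Rᶜ,
        (moranIter r wR wM t S U * ∑ T ∈ R, moranIter r wR wM n U T) = 0 := by
      rw [hR, compl_compl, Finset.sum_pair huvne]
      have hu : ∑ T ∈ R, moranIter r wR wM n Finset.univ T = 0 := by
        refine Finset.sum_eq_zero fun T hT => ?_
        rw [hR] at hT
        simp only [Finset.mem_compl, Finset.mem_insert, Finset.mem_singleton, not_or] at hT
        rw [moranIter_absorbing habsU n, if_neg hT.1]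
      have he : ∑ T ∈ R, moranIter r wR wM n (∅ : Finset V) T = 0 := by
        refine Finset.sum_eq_zero fun T hT => ?_
        rw [hR] at hT
        simp only [Finset.mem_compl, Finset.mem_insert, Finset.mem_singleton, not_or] at hT
        rw [moranIter_absorbing habsE n, if_neg hT.2]
      rw [hu, he, mul_zero, mul_zero, add_zero]
    rw [h2, add_zero]
    calc ∑ U ∈ R, (moranIter r wR wM t S U * ∑ T ∈ R, moranIter r wR wM n U T)
        ≤ ∑ U ∈ R, moranIter r wR wM t S U * (1 - ε) := by
          refine Finset.sum_le_sum fun U _ => ?_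
          refine mul_le_mul_of_nonneg_left ?_ (hiternn t S U)
          rw [hsplit n U]
          have := hεle U
          rw [hg] at this
          simp only at this
          linarith
      _ = (1 - ε) * q t := by
          rw [hq]
          simp only
          rw [← Finset.sum_mul, mul_comm]
  have hq0 : q 0 ≤ 1 := by
    have := h1 0
    have ha0 := hiternn 0 S Finset.univ
    have hb0 := hiternn 0 S ∅
    rw [ha, hb] at this
    simp only at this
    linarith
  have hdecay : ∀ k, q (k * n) ≤ (1 - ε)^k := by
    intro k
    induction k with
    | zero => simpa using hq0
    | succ k ih =>
      have hkn : (k + 1) * n = k * n + n := by ring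
      rw [hkn, pow_succ]
      calc q (k * n + n) ≤ (1 - ε) * q (k * n) := hcontr _
        _ ≤ (1 - ε) * (1 - ε)^k := mul_le_mul_of_nonneg_left ih (by linarith)
        _ = (1 - ε)^k * (1 - ε) := mul_comm _ _
  -- sup bookkeeping
  have hle1 : ∀ m T, moranIter r wR wM m S T ≤ 1 := fun m T =>
    moranIter_le_one hr hwR hwM m S T
  have bddA : BddAbove (Set.range a) := ⟨1, by rintro x ⟨t, rfl⟩; exact hle1 t _⟩
  have bddB : BddAbove (Set.range b) := ⟨1, by rintro x ⟨t, rfl⟩; exact hle1 t _⟩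
  have amono : Monotone a := moranIter_mono hr hwR hwM habsU S
  have bmono : Monotone b := moranIter_mono hr hwR hwM habsE S
  have hab : ∀ m, a m + b m ≤ 1 := by
    intro m
    have := h1 m
    have := hqnn m
    linarith
  refine le_antisymm ?_ ?_
  · refine ciSup_le fun t => ?_
    have hsb : (⨆ s, b s) ≤ 1 - a t := by
      refine ciSup_le fun s => ?_
      have h1' := hab (max s t)
      have h2' := amono (le_max_right s t)
      have h3' := bmono (le_max_left s t)
      linarith
    linarith
  · have key : 1 ≤ (⨆ t, a t) + ⨆ t, b t := by
      refine le_of_forall_pos_le_add fun δ hδ => ?_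
      obtain ⟨k, hk⟩ := exists_pow_lt_of_lt_one hδ (show 1 - ε < 1 by linarith)
      have h1' := h1 (k * n)
      have h2' := hdecay k
      have h3' := le_ciSup bddA (k * n)
      have h4' := le_ciSup bddB (k * n)
      linarith
    linarith



theorem moran_duality
    {V : Type*} [Fintype V] [DecidableEq V] [Nonempty V]
    (r : ℝ) (hr : 0 < r) (wR wM : V → V → ℝ)
    (hwR : IsWeightMatrix wR) (hwM : IsWeightMatrix wM)
    (hscR : StronglyConnectedW wR) (hscM : StronglyConnectedW wM)
    (S : Finset V) :
    fixProbFrom r wR wM S = 1 - fixProbFrom (1 / r) wM wR Sᶜ := by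
  unfold fixProbFrom
  exact moran_duality' r hr wR wM hwR hwM hscR hscM S
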